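/- For any non-empty finite sets S_1,…,S_h ⊂ ℝ and any integer a ≥ 1, there exist finite sets V_1,…,V_h ⊂ ℝ such that: (1) V_y ⊇ S_y for each y ∈ {1,…,h}; (2) the sequence V_1,…,V_h is a-chunking; and (3) Σ_{y=1}^h |V_y| ≤ ((a+1)/a)² · Σ_{y=1}^h |S_y|. -/

import Mathlib

attribute [local instance] Classical.propDecidable

/-- `Chunks a X Y` : the finite set `X` `a`-chunks the finite set `Y`, i.e. every
`(a+1)`-element subset `S ⊆ Y` admits an `x ∈ X` with `min S ≤ x ≤ max S`
(equivalently, `s₁ ≤ x ≤ s₂` for some `s₁, s₂ ∈ S`). -/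
def Chunks (a : ℕ) (X Y : Finset ℝ) : Prop :=
  ∀ S ⊆ Y, S.card = a + 1 → ∃ x ∈ X, (∃ s ∈ S, s ≤ x) ∧ ∃ s ∈ S, x ≤ s

noncomputable def chunkSample (a : ℕ) (Y : Finset ℝ) : Finset ℝ :=
  (Finset.univ.filter (fun i : Fin Y.card => ((i : ℕ) + 1) % (a + 1) = 0)).image
    (fun i => ((Y.orderIsoOfFin rfl i : Y) : ℝ))

lemma chunkSample_subset (a : ℕ) (Y : Finset ℝ) : chunkSample a Y ⊆ Y := by
  intro x hx
  simp only [chunkSample, Finset.mem_image] at hx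
  obtain ⟨i, _, rfl⟩ := hx
  exact (Y.orderIsoOfFin rfl i).2

lemma chunkSample_card_le (a : ℕ) (Y : Finset ℝ) :
    (chunkSample a Y).card ≤ Y.card / (a + 1) := by
  refine Finset.card_image_le.trans ?_
  have h2 : (Finset.univ.filter (fun i : Fin Y.card => ((i : ℕ) + 1) % (a + 1) = 0)).card
      ≤ ((Finset.range Y.card).filter (fun i => (a + 1) ∣ (i + 1))).card := by
    refine Finset.card_le_card_of_injOn (fun i => (i : ℕ)) ?_ ?_
    · intro i hi
      simp only [Finset.mem_coe, Finset.mem_filter, Finset.mem_univ, true_and] at hi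
      simp only [Finset.mem_coe, Finset.mem_filter, Finset.mem_range]
      exact ⟨i.2, Nat.dvd_of_mod_eq_zero hi⟩
    · intro i _ j _ hij
      exact Fin.ext hij
  refine h2.trans (le_of_eq ?_)
  exact Nat.card_multiples Y.card (a + 1)

lemma chunks_mono {a : ℕ} {X X' Y Y' : Finset ℝ} (hX : X ⊆ X') (hY : Y' ⊆ Y)
    (hc : Chunks a X Y) : Chunks a X' Y' := fun S hS hcard => by
  obtain ⟨x, hx, h1, h2⟩ := hc S (hS.trans hY) hcard
  exact ⟨x, hX hx, h1, h2⟩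

lemma chunks_union {a : ℕ} {X Y Z : Finset ℝ} (hc : Chunks a X Y) (hZ : Z ⊆ X) :
    Chunks a X (Y ∪ Z) := by
  intro S hS hcard
  by_cases hx : ∃ x ∈ S, x ∈ Z
  · obtain ⟨x, hxS, hxZ⟩ := hx
    exact ⟨x, hZ hxZ, ⟨x, hxS, le_refl x⟩, ⟨x, hxS, le_refl x⟩⟩
  · push_neg at hx
    refine hc S ?_ hcard
    intro s hs
    rcases Finset.mem_union.mp (hS hs) with h' | h'
    · exact h'
    · exact absurd h' (hx s hs)

lemma chunks_chunkSample (a : ℕ) (Y : Finset ℝ) : Chunks a (chunkSample a Y) Y := by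
  intro S hSY hcard
  set n := Y.card with hn
  set e := Y.orderIsoOfFin rfl with he
  set T : Finset (Fin n) := S.attach.image (fun s => e.symm ⟨s.1, hSY s.2⟩) with hT
  have hTcard : T.card = a + 1 := by
    rw [hT, Finset.card_image_of_injective _ ?_, Finset.card_attach, hcard]
    intro s t hst
    have h1 := e.symm.injective hst
    simp only [Subtype.mk.injEq] at h1
    exact Subtype.ext h1
  have hTne : T.Nonempty := Finset.card_pos.mp (by omega)
  set i₁ := T.min' hTne with hi1
  set i₂ := T.max' hTne with hi2
  have hmemS : ∀ i ∈ T, ((e i : Y) : ℝ) ∈ S := by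
    intro i hi
    rw [hT, Finset.mem_image] at hi
    obtain ⟨s, _, rfl⟩ := hi
    simp only [OrderIso.apply_symm_apply]
    exact s.2
  have hgap : (i₁ : ℕ) + a ≤ (i₂ : ℕ) := by
    have hsub : T ⊆ Finset.Icc i₁ i₂ := fun i hi =>
      Finset.mem_Icc.mpr ⟨T.min'_le i hi, T.le_max' i hi⟩
    have h3 := Finset.card_le_card hsub
    rw [hTcard, Fin.card_Icc] at h3
    omega
  -- find the sampled index between i₁ and i₂
  set m := (((i₁ : ℕ) + 1 + a) / (a + 1)) * (a + 1) with hm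
  have hm1 : (i₁ : ℕ) + 1 ≤ m := by
    have := Nat.lt_div_mul_add (a := (i₁ : ℕ) + 1 + a) (b := a + 1) (Nat.succ_pos a)
    omega
  have hm2 : m ≤ (i₁ : ℕ) + 1 + a := by
    rw [hm]; exact Nat.div_mul_le_self _ _
  have hmn : m - 1 < n := by
    have : (i₂ : ℕ) < n := i₂.2
    omega
  set j : Fin n := ⟨m - 1, hmn⟩ with hj
  have hxmem : ((e j : Y) : ℝ) ∈ chunkSample a Y := by
    simp only [chunkSample, Finset.mem_image]
    refine ⟨j, Finset.mem_filter.mpr ⟨Finset.mem_univ _, ?_⟩, rfl⟩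
    have hjm : (j : ℕ) + 1 = m := by show m - 1 + 1 = m; omega
    rw [hjm, hm]
    exact Nat.mul_mod_left _ _
  refine ⟨((e j : Y) : ℝ), hxmem, ⟨((e i₁ : Y) : ℝ), hmemS i₁ (T.min'_mem hTne), ?_⟩,
    ⟨((e i₂ : Y) : ℝ), hmemS i₂ (T.max'_mem hTne), ?_⟩⟩
  · have hle : i₁ ≤ j := by rw [Fin.le_def]; show (i₁ : ℕ) ≤ m - 1; omega
    exact e.monotone hle
  · have hle : j ≤ i₂ := by rw [Fin.le_def]; show m - 1 ≤ (i₂ : ℕ); omega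
    exact e.monotone hle

lemma geom_aux (q : ℝ) (hq1 : q < 1) (f g : ℕ → ℝ) (hf0 : f 0 = 0)
    (m : ℕ) (hrec : ∀ y < m, f (y + 1) ≤ g (y + 1) + q * f y) :
    (∑ y ∈ Finset.Icc 1 m, f y) + (q / (1 - q)) * f m ≤
      (1 / (1 - q)) * ∑ y ∈ Finset.Icc 1 m, g y := by
  induction m with
  | zero => simp [hf0]
  | succ m ih =>
    have h1q : 0 < 1 - q := by linarith
    have IH := ih (fun y hy => hrec y (by omega))
    rw [Finset.sum_Icc_succ_top (by omega : 1 ≤ m + 1),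
      Finset.sum_Icc_succ_top (by omega : 1 ≤ m + 1)]
    have hr := hrec m (by omega)
    set c := q / (1 - q) with hc
    set d := 1 / (1 - q) with hd
    have hd0 : 0 ≤ d := by positivity
    have h1 : d * f (m + 1) ≤ d * (g (m + 1) + q * f m) :=
      mul_le_mul_of_nonneg_left hr hd0
    have h2 : d * (g (m + 1) + q * f m) = d * g (m + 1) + c * f m := by
      rw [hc, hd]; field_simp
    have h3 : (1 : ℝ) + c = d := by rw [hc, hd]; field_simp; ring
    have h4 : f (m + 1) + c * f (m + 1) = d * f (m + 1) := by rw [← h3]; ring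
    have h5 : d * ((∑ y ∈ Finset.Icc 1 m, g y) + g (m + 1)) =
        d * (∑ y ∈ Finset.Icc 1 m, g y) + d * g (m + 1) := by ring
    linarith

lemma geom_bound (q : ℝ) (hq0 : 0 ≤ q) (hq1 : q < 1) (f g : ℕ → ℝ) (hf0 : f 0 = 0)
    (hfpos : ∀ y, 0 ≤ f y) (m : ℕ) (hrec : ∀ y < m, f (y + 1) ≤ g (y + 1) + q * f y) :
    ∑ y ∈ Finset.Icc 1 m, f y ≤ (1 / (1 - q)) * ∑ y ∈ Finset.Icc 1 m, g y := by
  have h1q : 0 < 1 - q := by linarith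
  have := geom_aux q hq1 f g hf0 m hrec
  have hnn : 0 ≤ (q / (1 - q)) * f m :=
    mul_nonneg (div_nonneg hq0 h1q.le) (hfpos m)
  linarith

/-- fractional cascading style chunking: given non-empty finite sets
`S_1, …, S_h ⊂ ℝ` and an integer `a ≥ 1`, there are finite sets `V_y ⊇ S_y` forming an
`a`-chunking sequence with `Σ |V_y| ≤ ((a+1)/a)² Σ |S_y|`. -/
theorem chunking_sequence (h a : ℕ) (ha : 1 ≤ a) (S : ℕ → Finset ℝ)
    (hS : ∀ y ∈ Finset.Icc 1 h, (S y).Nonempty) :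
    ∃ V : ℕ → Finset ℝ,
      (∀ y ∈ Finset.Icc 1 h, S y ⊆ V y) ∧
      (∀ y, 1 ≤ y → y + 1 ≤ h → Chunks a (V y) (V (y + 1)) ∧ Chunks a (V (y + 1)) (V y)) ∧
      ((∑ y ∈ Finset.Icc 1 h, (V y).card : ℝ) ≤
        (((a : ℝ) + 1) / a) ^ 2 * (∑ y ∈ Finset.Icc 1 h, (S y).card : ℕ)) := by
  classical
  -- downward pass
  let U : ℕ → Finset ℝ := fun k => Nat.rec ∅ (fun k Uk => S (h - k) ∪ chunkSample a Uk) k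
  have hU0 : U 0 = ∅ := rfl
  have hUsucc : ∀ k, U (k + 1) = S (h - k) ∪ chunkSample a (U k) := fun k => rfl
  set W : ℕ → Finset ℝ := fun y => U (h + 1 - y) with hWdef
  -- upward pass
  let V : ℕ → Finset ℝ := fun y => Nat.rec ∅ (fun y Vy => W (y + 1) ∪ chunkSample a Vy) y
  have hV0 : V 0 = ∅ := rfl
  have hVsucc : ∀ y, V (y + 1) = W (y + 1) ∪ chunkSample a (V y) := fun y => rfl
  have hWy : ∀ y, 1 ≤ y → y ≤ h → W y = S y ∪ chunkSample a (U (h - y)) := by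
    intro y h1 h2
    show U (h + 1 - y) = _
    have e1 : h + 1 - y = (h - y) + 1 := by omega
    rw [e1, hUsucc]
    have e2 : h - (h - y) = y := by omega
    rw [e2]
  have hWV : ∀ y, 1 ≤ y → W y ⊆ V y := by
    intro y h1
    obtain ⟨z, rfl⟩ : ∃ z, y = z + 1 := ⟨y - 1, by omega⟩
    rw [hVsucc]
    exact Finset.subset_union_left
  refine ⟨V, ?_, ?_, ?_⟩
  · intro y hy
    rw [Finset.mem_Icc] at hy
    refine subset_trans ?_ (hWV y hy.1)
    rw [hWy y hy.1 hy.2]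
    exact Finset.subset_union_left
  · intro y h1 h2
    constructor
    · -- Chunks a (V y) (V (y+1))
      rw [hVsucc]
      refine chunks_union ?_ (chunkSample_subset a (V y))
      refine chunks_mono ?_ (subset_refl _) (chunks_chunkSample a (W (y + 1)))
      have hU : U (h - y) = W (y + 1) := by
        show U (h - y) = U (h + 1 - (y + 1))
        congr 1
        omega
      rw [← hU]
      refine subset_trans ?_ (hWV y h1)
      rw [hWy y h1 (by omega)]
      exact Finset.subset_union_right
    · -- Chunks a (V (y+1)) (V y)
      rw [hVsucc]
      exact chunks_mono Finset.subset_union_right (subset_refl _)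
        (chunks_chunkSample a (V y))
  · -- cardinality bound
    have ha0 : (0 : ℝ) < a := by exact_mod_cast Nat.lt_of_lt_of_le Nat.zero_lt_one ha
    set q : ℝ := 1 / ((a : ℝ) + 1) with hq
    have hq0 : 0 ≤ q := by positivity
    have hq1 : q < 1 := by
      rw [hq, div_lt_one (by linarith)]
      linarith
    have hd : 1 / (1 - q) = ((a : ℝ) + 1) / a := by
      rw [hq]
      field_simp
      rw [add_sub_cancel_right, div_self ha0.ne']
    have hsamp : ∀ Z : Finset ℝ, ((chunkSample a Z).card : ℝ) ≤ q * Z.card := by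
      intro Z
      have h1 : ((chunkSample a Z).card : ℝ) ≤ ((Z.card / (a + 1) : ℕ) : ℝ) := by
        exact_mod_cast chunkSample_card_le a Z
      refine h1.trans (Nat.cast_div_le.trans ?_)
      rw [hq]
      push_cast
      rw [div_eq_mul_inv, one_div, mul_comm]
    -- bound on U
    have hrecU : ∀ y < h, ((U (y + 1)).card : ℝ) ≤
        ((S (h + 1 - (y + 1))).card : ℝ) + q * ((U y).card : ℝ) := by
      intro y hy
      have e1 : h + 1 - (y + 1) = h - y := by omega
      rw [e1, hUsucc]
      calc ((S (h - y) ∪ chunkSample a (U y)).card : ℝ)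
          ≤ ((S (h - y)).card : ℝ) + ((chunkSample a (U y)).card : ℝ) := by
            exact_mod_cast Finset.card_union_le _ _
        _ ≤ ((S (h - y)).card : ℝ) + q * ((U y).card : ℝ) := by
            linarith [hsamp (U y)]
    have hUbound := geom_bound q hq0 hq1 (fun k => ((U k).card : ℝ))
      (fun k => ((S (h + 1 - k)).card : ℝ)) (by simp [hU0])
      (fun k => by positivity) h hrecU
    -- bound on V
    have hrecV : ∀ y < h, ((V (y + 1)).card : ℝ) ≤
        ((W (y + 1)).card : ℝ) + q * ((V y).card : ℝ) := by
      intro y hy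
      rw [hVsucc]
      calc ((W (y + 1) ∪ chunkSample a (V y)).card : ℝ)
          ≤ ((W (y + 1)).card : ℝ) + ((chunkSample a (V y)).card : ℝ) := by
            exact_mod_cast Finset.card_union_le _ _
        _ ≤ ((W (y + 1)).card : ℝ) + q * ((V y).card : ℝ) := by
            linarith [hsamp (V y)]
    have hVbound := geom_bound q hq0 hq1 (fun y => ((V y).card : ℝ))
      (fun y => ((W y).card : ℝ)) (by simp [hV0])
      (fun y => by positivity) h hrecV
    -- reindexing
    have hreflect : ∀ F : ℕ → ℝ,
        ∑ k ∈ Finset.Icc 1 h, F (h + 1 - k) = ∑ y ∈ Finset.Icc 1 h, F y := by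
      intro F
      refine Finset.sum_nbij' (fun k => h + 1 - k) (fun k => h + 1 - k) ?_ ?_ ?_ ?_ ?_
      · intro k hk
        rw [Finset.mem_Icc] at hk
        show h + 1 - k ∈ Finset.Icc 1 h
        rw [Finset.mem_Icc]; omega
      · intro k hk
        rw [Finset.mem_Icc] at hk
        show h + 1 - k ∈ Finset.Icc 1 h
        rw [Finset.mem_Icc]; omega
      · intro k hk
        rw [Finset.mem_Icc] at hk
        show h + 1 - (h + 1 - k) = k
        omega
      · intro k hk
        rw [Finset.mem_Icc] at hk
        show h + 1 - (h + 1 - k) = k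
        omega
      · intro k hk; rfl
    have hWsum : ∑ y ∈ Finset.Icc 1 h, ((W y).card : ℝ)
        = ∑ k ∈ Finset.Icc 1 h, ((U k).card : ℝ) :=
      hreflect (fun k => ((U k).card : ℝ))
    have hSsum : ∑ k ∈ Finset.Icc 1 h, ((S (h + 1 - k)).card : ℝ)
        = ∑ y ∈ Finset.Icc 1 h, ((S y).card : ℝ) :=
      hreflect (fun y => ((S y).card : ℝ))
    have hd0 : 0 ≤ ((a : ℝ) + 1) / a := by positivity
    rw [hd] at hUbound hVbound
    rw [hWsum] at hVbound
    rw [hSsum] at hUbound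
    have hfinal : (∑ y ∈ Finset.Icc 1 h, ((V y).card : ℝ)) ≤
        (((a : ℝ) + 1) / a) ^ 2 * ∑ y ∈ Finset.Icc 1 h, ((S y).card : ℝ) := by
      calc (∑ y ∈ Finset.Icc 1 h, ((V y).card : ℝ))
          ≤ (((a : ℝ) + 1) / a) * ∑ k ∈ Finset.Icc 1 h, ((U k).card : ℝ) := hVbound
        _ ≤ (((a : ℝ) + 1) / a) *
            ((((a : ℝ) + 1) / a) * ∑ y ∈ Finset.Icc 1 h, ((S y).card : ℝ)) :=
            mul_le_mul_of_nonneg_left hUbound hd0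
        _ = (((a : ℝ) + 1) / a) ^ 2 * ∑ y ∈ Finset.Icc 1 h, ((S y).card : ℝ) := by ring
    push_cast
    push_cast at hfinal
    exact hfinal
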